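/- The function g(x) := 4e^x(e^{2x}+3)/(−24e^x + 6e^{2x} + 8e^{3x} + e^{4x} + 9) is positive for x > 0 and satisfies x·g(x) → 1 as x → 0⁺. Consequently ∫₀¹ √(g(x)) dx < ∞. -/

import Mathlib

open Real MeasureTheory

noncomputable def g8 (x : ℝ) : ℝ :=
  4 * exp x * (exp (2 * x) + 3) /
    (-24 * exp x + 6 * exp (2 * x) + 8 * exp (3 * x) + exp (4 * x) + 9)

lemma g8_eq (x : ℝ) : g8 x =
    4 * exp x * ((exp x)^2 + 3) /
      ((exp x - 1) * ((exp x)^3 + 9*(exp x)^2 + 15*exp x - 9)) := by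
  unfold g8
  rw [show (2:ℝ)*x = x + x by ring, show (3:ℝ)*x = x + (x+x) by ring,
      show (4:ℝ)*x = x + (x+(x+x)) by ring, Real.exp_add]
  simp only [Real.exp_add]
  ring

lemma one_lt_u {x : ℝ} (hx : 0 < x) : 1 < exp x := by
  calc (1:ℝ) = exp 0 := (Real.exp_zero).symm
  _ < exp x := Real.exp_lt_exp.mpr hx

lemma Q_ge {u : ℝ} (hu : 1 ≤ u) : 16 ≤ u^3 + 9*u^2 + 15*u - 9 := by nlinarith

lemma den_pos {x : ℝ} (hx : 0 < x) :
    0 < (exp x - 1) * ((exp x)^3 + 9*(exp x)^2 + 15*exp x - 9) := by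
  have hu := one_lt_u hx
  have hQ := Q_ge hu.le
  nlinarith

lemma g8_pos {x : ℝ} (hx : 0 < x) : 0 < g8 x := by
  rw [g8_eq]
  exact div_pos (by positivity) (den_pos hx)

lemma g8_le {x : ℝ} (hx : 0 < x) (hx1 : x < 1) : g8 x ≤ 9 / x := by
  rw [g8_eq]
  have hu := one_lt_u hx
  have hQ := Q_ge hu.le
  have hux : 1 + x ≤ exp x := by linarith [Real.add_one_le_exp x]
  have hu3 : exp x < 3 := by
    calc exp x < exp 1 := Real.exp_lt_exp.mpr hx1
    _ < 2.7182818286 := Real.exp_one_lt_d9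
    _ < 3 := by norm_num
  rw [div_le_div_iff₀ (den_pos hx) hx]
  nlinarith [sq_nonneg (exp x), mul_pos hx (den_pos hx),
    mul_nonneg (sub_nonneg.2 hQ) hx.le,
    mul_nonneg (mul_nonneg (sub_nonneg.2 hQ) hx.le) (sub_nonneg.2 hu.le)]

lemma tendsto_part : Filter.Tendsto (fun x => x * g8 x) (nhdsWithin 0 (Set.Ioi 0)) (nhds 1) := by
  have hA : Filter.Tendsto (fun x : ℝ => x / (exp x - 1)) (nhdsWithin 0 (Set.Ioi 0)) (nhds 1) := by
    have h : HasDerivAt exp 1 0 := by simpa using Real.hasDerivAt_exp 0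
    rw [hasDerivAt_iff_tendsto_slope] at h
    have h2 := h.inv₀ one_ne_zero
    rw [inv_one] at h2
    have h3 : Filter.Tendsto (fun x : ℝ => (slope exp 0 x)⁻¹) (nhdsWithin 0 (Set.Ioi 0)) (nhds 1) :=
      h2.mono_left (nhdsWithin_mono 0 (fun x hx => ne_of_gt hx))
    refine h3.congr (fun x => ?_)
    rw [slope_def_field]
    simp [div_eq_mul_inv, mul_comm]
  have hB : Filter.Tendsto
      (fun x : ℝ => 4 * exp x * ((exp x)^2 + 3) / ((exp x)^3 + 9*(exp x)^2 + 15*exp x - 9))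
      (nhdsWithin 0 (Set.Ioi 0)) (nhds 1) := by
    have hc : ContinuousAt
        (fun x : ℝ => 4 * exp x * ((exp x)^2 + 3) / ((exp x)^3 + 9*(exp x)^2 + 15*exp x - 9)) 0 := by
      apply ContinuousAt.div
      · fun_prop
      · fun_prop
      · simp [Real.exp_zero]; norm_num
    have : (fun x : ℝ => 4 * exp x * ((exp x)^2 + 3) / ((exp x)^3 + 9*(exp x)^2 + 15*exp x - 9)) 0
        = 1 := by simp [Real.exp_zero]; norm_num
    exact (this ▸ hc.continuousWithinAt.tendsto)
  have := hA.mul hB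
  rw [one_mul] at this
  refine this.congr' ?_
  filter_upwards [self_mem_nhdsWithin] with x (hx : 0 < x)
  have hu := one_lt_u hx
  have hQ := Q_ge hu.le
  rw [g8_eq]
  field_simp

theorem figure8_pressure_incomplete :
    (∀ x > 0, 0 < g8 x) ∧
    Filter.Tendsto (fun x => x * g8 x) (nhdsWithin 0 (Set.Ioi 0)) (nhds 1) ∧
    IntegrableOn (fun x => Real.sqrt (g8 x)) (Set.Ioo 0 1) := by
  refine ⟨fun x hx => g8_pos hx, tendsto_part, ?_⟩
  have hmeas : Measurable fun x => Real.sqrt (g8 x) := by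
    apply Real.continuous_sqrt.measurable.comp
    unfold g8
    fun_prop
  have hbound : IntegrableOn (fun x : ℝ => 3 / Real.sqrt x) (Set.Ioo 0 1) := by
    have h := (intervalIntegral.intervalIntegrable_rpow' (a := 0) (b := 1) (r := -(1/2:ℝ)) (by norm_num)).1
    have h2 : IntegrableOn (fun x : ℝ => x ^ (-(1/2):ℝ)) (Set.Ioo 0 1) :=
      h.mono_set Set.Ioo_subset_Ioc_self
    have h3 : IntegrableOn (fun x : ℝ => 3 * x ^ (-(1/2):ℝ)) (Set.Ioo 0 1) := h2.const_mul 3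
    refine h3.congr_fun (fun x hx => ?_) measurableSet_Ioo
    show 3 * x ^ (-(1/2):ℝ) = 3 / Real.sqrt x
    rw [Real.rpow_neg hx.1.le, Real.sqrt_eq_rpow, div_eq_mul_inv]
    ring
  refine Integrable.mono' hbound hmeas.aestronglyMeasurable ?_
  rw [ae_restrict_iff' measurableSet_Ioo]
  filter_upwards with x hx
  rcases hx with ⟨hx0, hx1⟩
  rw [Real.norm_eq_abs, abs_of_nonneg (Real.sqrt_nonneg _)]
  have h9 : g8 x ≤ 9 / x := g8_le hx0 hx1
  calc Real.sqrt (g8 x) ≤ Real.sqrt (9 / x) := Real.sqrt_le_sqrt h9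
  _ = 3 / Real.sqrt x := by
      rw [show (9:ℝ)/x = (3 / Real.sqrt x)^2 by
        rw [div_pow, Real.sq_sqrt hx0.le]; norm_num]
      exact Real.sqrt_sq (by positivity)
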